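/- There exists a constant C such that for all natural numbers p, q, r with n = p + q + r, if p ≥ log₂ n + C and r ≥ log₂ n + C, then there exists a predicate T : B^p × B^q × B^r → Bool whose decomposition complexity is greater than n − C. -/

import Mathlib

/-- `BS k` is the set of binary strings of length `k`. -/
abbrev BS (k : ℕ) := Fin k → Bool

/-- The decomposition complexity of `T : B^p × B^q × B^r → M` is at most `n`. -/
def DecompBound {p q r : ℕ} {M : Type*} (T : BS p → BS q → BS r → M) (n : ℕ) : Prop :=
  ∃ u v : ℕ, u + v ≤ n ∧
    ∃ (a : BS p → BS q → BS u) (b : BS q → BS r → BS v) (t : BS u → BS v → M),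
      ∀ x y z, T x y z = t (a x y) (b y z)

namespace DCAux

/-- Recast a binary string of length `j` to one of length `k`, padding with `false`. -/
def recast {j k : ℕ} (s : BS j) : BS k := fun i => if h : (i : ℕ) < j then s ⟨i, h⟩ else false

lemma recast_recast {j k : ℕ} (h : j ≤ k) (s : BS j) : recast (recast s : BS k) = s := by
  funext i
  have hi : (i : ℕ) < k := lt_of_lt_of_le i.isLt h
  simp [recast, hi, i.isLt]

lemma card_BS (k : ℕ) : Fintype.card (BS k) = 2 ^ k := by
  simp [Fintype.card_fun]

lemma card_fun2 (a b c : ℕ) :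
    Fintype.card (BS a → BS b → BS c) = 2 ^ (c * 2 ^ (a + b)) := by
  rw [Fintype.card_fun, Fintype.card_fun, card_BS, card_BS, card_BS, ← pow_mul, ← pow_mul]
  congr 1
  rw [pow_add]
  ring

lemma card_fun3 (a b c : ℕ) :
    Fintype.card (BS a → BS b → BS c → Bool) = 2 ^ (2 ^ (a + b + c)) := by
  rw [Fintype.card_fun, Fintype.card_fun, Fintype.card_fun, Fintype.card_bool,
    card_BS, card_BS, card_BS, ← pow_mul, ← pow_mul]
  congr 1
  rw [pow_add, pow_add]
  ring

/-- Counting lemma: if the number of "encodings" with parameter `m` is smaller than the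
number of all predicates, some predicate has decomposition complexity exceeding `m`. -/
lemma exists_hard (p q r m : ℕ)
    (hcard : (m + 1) * ((m + 1) * (2 ^ (m * 2 ^ (p + q)) *
        (2 ^ (m * 2 ^ (q + r)) * 2 ^ (2 ^ m)))) < 2 ^ (2 ^ (p + q + r))) :
    ∃ T : BS p → BS q → BS r → Bool, ¬ DecompBound T m := by
  by_contra hall
  push_neg at hall
  -- decoding map
  let decode : Fin (m + 1) × Fin (m + 1) × (BS p → BS q → BS m) × (BS q → BS r → BS m) ×
      (BS m → Bool) → (BS p → BS q → BS r → Bool) := fun w x y z =>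
    w.2.2.2.2 (recast (Fin.append ((recast (w.2.2.1 x y)) : BS w.1)
      ((recast (w.2.2.2.1 y z)) : BS w.2.1)))
  have hsurj : Function.Surjective decode := by
    intro T
    obtain ⟨u, v, huv, a, b, t, hT⟩ := hall T
    have hu : u ≤ m := le_trans (Nat.le_add_right u v) huv
    have hv : v ≤ m := le_trans (Nat.le_add_left v u) huv
    refine ⟨⟨⟨u, Nat.lt_succ_of_le hu⟩, ⟨v, Nat.lt_succ_of_le hv⟩,
      fun x y => recast (a x y), fun y z => recast (b y z),
      fun s => t (fun i => (recast s : BS (u + v)) (Fin.castAdd v i))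
                 (fun i => (recast s : BS (u + v)) (Fin.natAdd u i))⟩, ?_⟩
    funext x y z
    show t _ _ = T x y z
    rw [recast_recast hu, recast_recast hv, recast_recast huv]
    simp only [Fin.append_left, Fin.append_right]
    exact (hT x y z).symm
  have hle := Fintype.card_le_of_surjective decode hsurj
  rw [card_fun3, Fintype.card_prod, Fintype.card_prod, Fintype.card_prod, Fintype.card_prod,
    card_fun2, card_fun2, Fintype.card_fun, Fintype.card_bool, card_BS] at hle
  simp only [Fintype.card_fin] at hle
  exact absurd hle (not_le_of_gt hcard)

end DCAux

/-- If `p` and `r` are at least `log₂ n + C` (with `n = p + q + r`), then some predicate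
on `B^p × B^q × B^r` has decomposition complexity greater than `n - C`. -/
theorem exists_predicate_of_high_decomposition_complexity :
    ∃ C : ℕ, ∀ p q r : ℕ,
      Nat.log 2 (p + q + r) + C ≤ p → Nat.log 2 (p + q + r) + C ≤ r →
      ∃ T : BS p → BS q → BS r → Bool, ¬ DecompBound T (p + q + r - C) := by
  refine ⟨4, fun p q r hp hr => ?_⟩
  set n := p + q + r with hn
  set L := Nat.log 2 n with hL
  set m := n - 4 with hm
  apply DCAux.exists_hard
  -- arithmetic
  have hnL : n < 2 ^ (L + 1) := Nat.lt_pow_succ_log_self (by norm_num) n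
  have hn8 : 2 * L + 8 ≤ n := by omega
  set k := n - 4 with hk
  have hkn : n = k + 4 := by omega
  -- bound the two middle factors
  have h1 : m * 2 ^ (p + q) < 2 ^ (k + 1) := by
    calc m * 2 ^ (p + q) < 2 ^ (L + 1) * 2 ^ (p + q) := by
          apply Nat.mul_lt_mul_of_lt_of_le (by omega) le_rfl (Nat.pow_pos (by norm_num))
      _ = 2 ^ (L + 1 + (p + q)) := (pow_add 2 _ _).symm
      _ ≤ 2 ^ (k + 1) := Nat.pow_le_pow_right (by norm_num) (by omega)
  have h2 : m * 2 ^ (q + r) < 2 ^ (k + 1) := by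
    calc m * 2 ^ (q + r) < 2 ^ (L + 1) * 2 ^ (q + r) := by
          apply Nat.mul_lt_mul_of_lt_of_le (by omega) le_rfl (Nat.pow_pos (by norm_num))
      _ = 2 ^ (L + 1 + (q + r)) := (pow_add 2 _ _).symm
      _ ≤ 2 ^ (k + 1) := Nat.pow_le_pow_right (by norm_num) (by omega)
  have h3 : m + 1 ≤ 2 ^ k := by
    have h5 : 2 ^ (L + 1) ≤ 2 ^ k := Nat.pow_le_pow_right (by norm_num) (by omega)
    omega
  -- combine
  have hE : (m + 1) * ((m + 1) * (2 ^ (m * 2 ^ (p + q)) * (2 ^ (m * 2 ^ (q + r)) * 2 ^ (2 ^ m))))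
      ≤ 2 ^ (k + (k + (m * 2 ^ (p + q) + (m * 2 ^ (q + r) + 2 ^ m)))) := by
    calc (m + 1) * ((m + 1) * (2 ^ (m * 2 ^ (p + q)) * (2 ^ (m * 2 ^ (q + r)) * 2 ^ (2 ^ m))))
        ≤ 2 ^ k * (2 ^ k * (2 ^ (m * 2 ^ (p + q)) * (2 ^ (m * 2 ^ (q + r)) * 2 ^ (2 ^ m)))) :=
          Nat.mul_le_mul h3 (Nat.mul_le_mul h3 le_rfl)
      _ = _ := by rw [← pow_add, ← pow_add, ← pow_add, ← pow_add]
  have hexp : k + (k + (m * 2 ^ (p + q) + (m * 2 ^ (q + r) + 2 ^ m))) < 2 ^ n := by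
    have e1 : 2 ^ (k + 1) = 2 * 2 ^ k := by rw [pow_succ]; ring
    have e2 : 2 ^ n = 2 ^ k * 16 := by rw [hkn, pow_add]; norm_num
    have e3 : (2 : ℕ) ^ m = 2 ^ k := by rw [hm, hk]
    have e4 : 1 ≤ 2 ^ k := Nat.one_le_two_pow
    have e5 : k < 2 ^ k := Nat.lt_two_pow_self
    omega
  calc (m + 1) * ((m + 1) * (2 ^ (m * 2 ^ (p + q)) * (2 ^ (m * 2 ^ (q + r)) * 2 ^ (2 ^ m))))
      ≤ 2 ^ (k + (k + (m * 2 ^ (p + q) + (m * 2 ^ (q + r) + 2 ^ m)))) := hE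
    _ < 2 ^ (2 ^ n) := Nat.pow_lt_pow_right (by norm_num) hexp
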